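/- Let ι and A be finite index sets with a map a : ι → A, let W be the Boolean ι×A matrix with W i c = 1 if a i = c and 0 otherwise, let m : ι → ℝ with m i > 0 for all i, and assume every aggregate is nonempty. Then for every function κ : ℝ → ℝ and every vector v : A → ℝ, ((Wᵀ * diagonal m * W)⁻¹ * Wᵀ * diagonal m) *ᵥ (fun i => κ (v (a i))) = fun c => κ (v c). That is, evaluating κ entrywise on the piecewise-constant fine-level interpolation W v and then taking volume-weighted aggregate averages is the same as evaluating κ directly on the aggregate values v; consequently κ(Π̃p) can be evaluated directly on the coarse level without visiting the finest level (the key property of the piecewise-constant projector Π̃, Appendix B of the paper). -/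

import Mathlib

open Matrix

/-- Key property of the piecewise-constant projector Π̃ (Appendix B): averaging the
entrywise evaluation of κ on the piecewise-constant interpolation recovers the
direct evaluation of κ on the aggregate values. -/
theorem projector_commutes_with_kappa
    {ι A : Type*} [Fintype ι] [Fintype A] [DecidableEq ι] [DecidableEq A]
    (a : ι → A)
    (W : Matrix ι A ℝ) (hW : ∀ (i : ι) (c : A), W i c = if a i = c then 1 else 0)
    (m : ι → ℝ) (hm : ∀ i, 0 < m i)
    (hsurj : ∀ c : A, ∃ i : ι, a i = c) :
    ∀ (κ : ℝ → ℝ) (v : A → ℝ),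
      ((Wᵀ * Matrix.diagonal m * W)⁻¹ * (Wᵀ * Matrix.diagonal m)) *ᵥ
          (fun i => κ (v (a i))) = fun c => κ (v c) := by
  intro κ v
  set S : A → ℝ := fun c => ∑ i, if a i = c then m i else 0 with hS
  have hSpos : ∀ c, 0 < S c := by
    intro c
    obtain ⟨i, hi⟩ := hsurj c
    have hle : m i ≤ S c := by
      refine Finset.single_le_sum (f := fun j => if a j = c then m j else 0)
        (fun j _ => ?_) (Finset.mem_univ i) |>.trans_eq' ?_
      · split <;> [exact (hm j).le; rfl]
      · simp [hi]
    exact lt_of_lt_of_le (hm i) hle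
  have hSne : ∀ c, S c ≠ 0 := fun c => (hSpos c).ne'
  have hdiag : Wᵀ * Matrix.diagonal m * W = Matrix.diagonal S := by
    ext c d
    simp only [Matrix.mul_apply, Matrix.diagonal_apply, Matrix.transpose_apply, hW,
      mul_ite, mul_one, mul_zero, ite_mul, zero_mul, Finset.sum_ite_eq,
      Finset.mem_univ, if_true]
    by_cases h : c = d
    · subst h
      simp only [if_pos rfl, hS]
      apply Finset.sum_congr rfl
      intro i _
      by_cases hi : a i = c <;> simp [hi]
    · rw [if_neg h]
      apply Finset.sum_eq_zero
      intro i _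
      by_cases hi : a i = c <;> by_cases hd : a i = d <;> simp_all
  have hinv : (Wᵀ * Matrix.diagonal m * W)⁻¹ = Matrix.diagonal (fun c => (S c)⁻¹) := by
    rw [hdiag]
    apply Matrix.inv_eq_right_inv
    have h : (fun i => S i * (S i)⁻¹) = fun _ => (1:ℝ) :=
      funext fun c => mul_inv_cancel₀ (hSne c)
    rw [Matrix.diagonal_mul_diagonal, h, Matrix.diagonal_one]
  rw [hinv, ← Matrix.mulVec_mulVec, ← Matrix.mulVec_mulVec]
  have h1 : Matrix.diagonal m *ᵥ (fun i => κ (v (a i))) = fun i => m i * κ (v (a i)) := by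
    funext i; simp [Matrix.mulVec_diagonal]
  rw [h1]
  have h2 : Wᵀ *ᵥ (fun i => m i * κ (v (a i))) = fun c => S c * κ (v c) := by
    funext c
    simp only [Matrix.mulVec, dotProduct, Matrix.transpose_apply, hW, hS,
      ite_mul, one_mul, zero_mul, Finset.sum_mul]
    apply Finset.sum_congr rfl
    intro i _
    by_cases hi : a i = c <;> simp [hi]
  rw [h2]
  funext c
  simp [Matrix.mulVec_diagonal, ← mul_assoc, inv_mul_cancel₀ (hSne c)]
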